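/- In Fishburn's example with candidates C = {a₁,…,a₇,x} and the 7-voter profile whose i-th vote is the i-th cyclic shift of a₁a₂…a₇ with x inserted in 5th position, the minimum number of adjacent swaps needed to make x a Condorcet winner is 7, while for each i the minimum number of adjacent swaps needed to make a_i a Condorcet winner is 6. -/

import Mathlib

/-- Candidate set: `0,…,6` are `a₁,…,a₇` and `7` is `x`. The `i`-th vote (for `i : Fin 7`)
as a map from positions to candidates: positions `0..3` hold `a_{i+1},…,a_{i+4}` (indices
cyclic mod 7), position `4` holds `x`, and positions `5..7` hold `a_{i+5},a_{i+6},a_{i+7}`. -/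
def fishburnFun (i : Fin 7) : Fin 8 → Fin 8 := fun j =>
  if j.val < 4 then ⟨(i.val + j.val) % 7, by omega⟩
  else if j.val = 4 then ⟨7, by omega⟩
  else ⟨(i.val + j.val - 1) % 7, by omega⟩

lemma fishburnFun_bijective : ∀ i, Function.Bijective (fishburnFun i) := by decide

/-- The Fishburn profile: 7 voters, the `i`-th vote being the `i`-th cyclic shift of
`a₁a₂…a₇` with `x` inserted in 5th position. -/
noncomputable def fishburnProfile : Fin 7 → Equiv.Perm (Fin 8) := fun i =>
  Equiv.ofBijective (fishburnFun i) (fishburnFun_bijective i)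

/-- One adjacent swap: one voter exchanges the candidates in two neighboring positions. -/
def AdjSwap (π π' : Fin 7 → Equiv.Perm (Fin 8)) : Prop :=
  ∃ (v : Fin 7) (j : Fin 7),
    π' v = π v * Equiv.swap j.castSucc j.succ ∧ ∀ u, u ≠ v → π' u = π u

/-- `c` is a Condorcet winner: for each other candidate, strictly more than half of the
7 voters rank `c` above it (smaller position means ranked higher). -/
def IsCondorcetWinner (π : Fin 7 → Equiv.Perm (Fin 8)) (c : Fin 8) : Prop :=
  ∀ c', c' ≠ c →
    7 < 2 * (Finset.univ.filter fun v : Fin 7 => ((π v)⁻¹ c : Fin 8) < (π v)⁻¹ c').card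

/-- The Dodgson score of `c`: the minimal number of adjacent swaps needed to make `c`
a Condorcet winner. -/
noncomputable def dodgsonScore (π : Fin 7 → Equiv.Perm (Fin 8)) (c : Fin 8) : ℕ :=
  sInf {k : ℕ | ∃ p : ℕ → (Fin 7 → Equiv.Perm (Fin 8)), p 0 = π ∧
    (∀ i < k, AdjSwap (p i) (p (i + 1))) ∧ IsCondorcetWinner (p k) c}

open Finset

def posInv (v : Fin 7) (c : Fin 8) : Fin 8 :=
  if c.val = 7 then 4
  else if (c.val + 7 - v.val) % 7 < 4 then
    ⟨(c.val + 7 - v.val) % 7, by have := Nat.mod_lt (c.val + 7 - v.val) (show 0 < 7 by norm_num); omega⟩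
  else ⟨(c.val + 7 - v.val) % 7 + 1, by have := Nat.mod_lt (c.val + 7 - v.val) (show 0 < 7 by norm_num); omega⟩

lemma posInv_spec : ∀ (v : Fin 7) (c : Fin 8), fishburnFun v (posInv v c) = c := by decide

lemma fishburn_inv (v : Fin 7) (c : Fin 8) : (fishburnProfile v)⁻¹ c = posInv v c := by
  have h : fishburnProfile v (posInv v c) = c := posInv_spec v c
  rw [show (fishburnProfile v)⁻¹ = (fishburnProfile v).symm from rfl, Equiv.symm_apply_eq]
  exact h.symm

lemma swap_lt_iff : ∀ (j : Fin 7) (p q : Fin 8),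
    ¬(p = j.castSucc ∧ q = j.succ) → ¬(p = j.succ ∧ q = j.castSucc) →
    (Equiv.swap j.castSucc j.succ p < Equiv.swap j.castSucc j.succ q ↔ p < q) := by decide

def cnt (π : Fin 7 → Equiv.Perm (Fin 8)) (c c' : Fin 8) : ℕ :=
  (Finset.univ.filter fun v : Fin 7 => ((π v)⁻¹ c : Fin 8) < (π v)⁻¹ c').card

def Ddef (π : Fin 7 → Equiv.Perm (Fin 8)) (c : Fin 8) : ℕ :=
  ∑ c' ∈ Finset.univ.erase c, (4 - cnt π c c')

lemma adj_D (π π' : Fin 7 → Equiv.Perm (Fin 8)) (h : AdjSwap π π') (c : Fin 8) :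
    Ddef π c ≤ Ddef π' c + 1 := by
  obtain ⟨v, j, hv, hu⟩ := h
  set a := π v j.castSucc with ha
  set b := π v j.succ with hb
  have key : ∀ c' : Fin 8, ¬(c = a ∧ c' = b) → ¬(c = b ∧ c' = a) → cnt π' c c' = cnt π c c' := by
    intro c' h1 h2
    unfold cnt
    congr 1
    apply Finset.filter_congr
    intro u _
    by_cases huv : u = v
    · subst huv
      rw [hv]
      have e1 : ((π u * Equiv.swap j.castSucc j.succ)⁻¹ : Equiv.Perm (Fin 8)) =
          Equiv.swap j.castSucc j.succ * (π u)⁻¹ := by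
        rw [mul_inv_rev, Equiv.swap_inv]
      rw [e1]
      simp only [Equiv.Perm.mul_apply, eq_iff_iff]
      apply swap_lt_iff
      · rintro ⟨hp, hq⟩
        exact h1 ⟨by rw [ha, ← hp, Equiv.Perm.inv_def, Equiv.apply_symm_apply],
                  by rw [hb, ← hq, Equiv.Perm.inv_def, Equiv.apply_symm_apply]⟩
      · rintro ⟨hp, hq⟩
        exact h2 ⟨by rw [hb, ← hp, Equiv.Perm.inv_def, Equiv.apply_symm_apply],
                  by rw [ha, ← hq, Equiv.Perm.inv_def, Equiv.apply_symm_apply]⟩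
    · rw [hu u huv]
  set c0 : Fin 8 := if c = a then b else if c = b then a else c with hc0
  have h1 : ∀ c' : Fin 8, c' ≠ c0 → cnt π' c c' = cnt π c c' := by
    intro c' hne
    apply key
    · rintro ⟨e1, e2⟩
      apply hne
      rw [hc0, if_pos e1, e2]
    · rintro ⟨e1, e2⟩
      apply hne
      rw [hc0]
      by_cases hab : c = a
      · rw [if_pos hab, e2, ← hab, e1]
      · rw [if_neg hab, if_pos e1, e2]
  have h2 : cnt π' c c0 ≤ cnt π c c0 + 1 := by
    unfold cnt
    have hsub : (Finset.univ.filter fun u : Fin 7 => ((π' u)⁻¹ c : Fin 8) < (π' u)⁻¹ c0) ⊆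
        insert v (Finset.univ.filter fun u : Fin 7 => ((π u)⁻¹ c : Fin 8) < (π u)⁻¹ c0) := by
      intro u hu'
      rw [Finset.mem_insert]
      by_cases huv : u = v
      · exact Or.inl huv
      · right
        rw [Finset.mem_filter] at hu' ⊢
        rw [← hu u huv]
        exact hu'
    calc (Finset.univ.filter fun u : Fin 7 => ((π' u)⁻¹ c : Fin 8) < (π' u)⁻¹ c0).card
        ≤ (insert v (Finset.univ.filter fun u : Fin 7 => ((π u)⁻¹ c : Fin 8) < (π u)⁻¹ c0)).card :=
          Finset.card_le_card hsub
      _ ≤ _ + 1 := Finset.card_insert_le _ _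
  unfold Ddef
  calc ∑ c' ∈ Finset.univ.erase c, (4 - cnt π c c')
      ≤ ∑ c' ∈ Finset.univ.erase c, ((4 - cnt π' c c') + if c' = c0 then 1 else 0) := by
        apply Finset.sum_le_sum
        intro c' _
        by_cases e : c' = c0
        · subst e
          rw [if_pos rfl]
          omega
        · rw [h1 c' e, if_neg e]
          omega
    _ = (∑ c' ∈ Finset.univ.erase c, (4 - cnt π' c c')) +
        ∑ c' ∈ Finset.univ.erase c, (if c' = c0 then 1 else 0) := Finset.sum_add_distrib
    _ ≤ _ + 1 := by
        gcongr
        rw [Finset.sum_ite_eq' (Finset.univ.erase c) c0 (fun _ => 1)]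
        split <;> omega

lemma chain_D (c : Fin 8) : ∀ (k : ℕ) (p : ℕ → (Fin 7 → Equiv.Perm (Fin 8))),
    (∀ i < k, AdjSwap (p i) (p (i + 1))) → Ddef (p 0) c ≤ Ddef (p k) c + k := by
  intro k
  induction k with
  | zero => intro p _; simp
  | succ n ih =>
    intro p hp
    have h1 := ih p (fun i hi => hp i (by omega))
    have h2 := adj_D (p n) (p (n + 1)) (hp n (by omega)) c
    omega

lemma cw_D (π : Fin 7 → Equiv.Perm (Fin 8)) (c : Fin 8) (h : IsCondorcetWinner π c) :
    Ddef π c = 0 := by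
  apply Finset.sum_eq_zero
  intro c' hc'
  have := h c' (Finset.ne_of_mem_erase hc')
  unfold cnt
  omega

lemma cnt_fish (c c' : Fin 8) :
    cnt fishburnProfile c c' = (Finset.univ.filter fun v : Fin 7 => posInv v c < posInv v c').card := by
  unfold cnt
  simp only [fishburn_inv]

lemma D_fish_x : Ddef fishburnProfile 7 = 7 := by
  unfold Ddef
  simp only [cnt_fish]
  decide

lemma D_fish_a : ∀ m : Fin 7, Ddef fishburnProfile m.castSucc = 6 := by
  unfold Ddef
  simp only [cnt_fish]
  decide

noncomputable def pX : ℕ → Fin 7 → Equiv.Perm (Fin 8) := fun k v =>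
  fishburnProfile v * (if v.val < k then Equiv.swap 3 4 else 1)

lemma pX_zero : pX 0 = fishburnProfile := by
  funext v
  simp [pX]

lemma pX_adj : ∀ i < 7, AdjSwap (pX i) (pX (i + 1)) := by
  intro i hi
  refine ⟨⟨i, hi⟩, ⟨3, by norm_num⟩, ?_, ?_⟩
  · show pX (i+1) ⟨i, hi⟩ = pX i ⟨i, hi⟩ * _
    simp [pX]
  · intro u hunv
    have hne : u.val ≠ i := fun h => hunv (Fin.ext h)
    simp only [pX]
    congr 1
    have h2 : u.val < i + 1 ↔ u.val < i := by omega
    simp [h2]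

lemma pX_inv (v : Fin 7) (c : Fin 8) : (pX 7 v)⁻¹ c = Equiv.swap (3 : Fin 8) 4 (posInv v c) := by
  have hv : v.val < 7 := v.isLt
  simp only [pX, if_pos hv, mul_inv_rev, Equiv.swap_inv, Equiv.Perm.mul_apply, fishburn_inv]

lemma pX_cw : IsCondorcetWinner (pX 7) 7 := by
  intro c' hc'
  simp only [pX_inv]
  revert hc'
  revert c'
  decide

def extra (m : Fin 7) (k : ℕ) (v : Fin 7) : Equiv.Perm (Fin 8) :=
  if v.val = (m.val + 4) % 7 then
    (if 1 ≤ k then Equiv.swap 2 3 else 1) * (if 2 ≤ k then Equiv.swap 1 2 else 1) *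
      (if 3 ≤ k then Equiv.swap 0 1 else 1)
  else if v.val = (m.val + 5) % 7 then
    (if 4 ≤ k then Equiv.swap 1 2 else 1) * (if 5 ≤ k then Equiv.swap 0 1 else 1)
  else if v.val = (m.val + 6) % 7 then
    (if 6 ≤ k then Equiv.swap 0 1 else 1)
  else 1

noncomputable def pA (m : Fin 7) : ℕ → Fin 7 → Equiv.Perm (Fin 8) := fun k v =>
  fishburnProfile v * extra m k v

lemma pA_zero (m : Fin 7) : pA m 0 = fishburnProfile := by
  funext v
  simp only [pA, extra]
  norm_num

lemma pA_adj (m : Fin 7) : ∀ i < 6, AdjSwap (pA m i) (pA m (i + 1)) := by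
  have hm4 : (m.val + 4) % 7 < 7 := Nat.mod_lt _ (by norm_num)
  have hm5 : (m.val + 5) % 7 < 7 := Nat.mod_lt _ (by norm_num)
  have hm6 : (m.val + 6) % 7 < 7 := Nat.mod_lt _ (by norm_num)
  have hne45 : (m.val + 4) % 7 ≠ (m.val + 5) % 7 := by omega
  have hne46 : (m.val + 4) % 7 ≠ (m.val + 6) % 7 := by omega
  have hne56 : (m.val + 5) % 7 ≠ (m.val + 6) % 7 := by omega
  intro i hi
  interval_cases i
  · -- step 0: vote i3, swap positions 2,3
    refine ⟨⟨(m.val + 4) % 7, hm4⟩, ⟨2, by norm_num⟩, ?_, ?_⟩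
    · simp only [pA, extra, mul_assoc]
      norm_num
      try decide
    · intro u hunv
      have hne : u.val ≠ (m.val + 4) % 7 := fun h => hunv (Fin.ext h)
      simp only [pA, extra, if_neg hne]
      norm_num
  · refine ⟨⟨(m.val + 4) % 7, hm4⟩, ⟨1, by norm_num⟩, ?_, ?_⟩
    · simp only [pA, extra, mul_assoc]
      norm_num
      try decide
    · intro u hunv
      have hne : u.val ≠ (m.val + 4) % 7 := fun h => hunv (Fin.ext h)
      simp only [pA, extra, if_neg hne]
      norm_num
  · refine ⟨⟨(m.val + 4) % 7, hm4⟩, ⟨0, by norm_num⟩, ?_, ?_⟩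
    · simp only [pA, extra, mul_assoc]
      norm_num
      try decide
    · intro u hunv
      have hne : u.val ≠ (m.val + 4) % 7 := fun h => hunv (Fin.ext h)
      simp only [pA, extra, if_neg hne]
      norm_num
  · -- step 3: vote i2, swap positions 1,2
    refine ⟨⟨(m.val + 5) % 7, hm5⟩, ⟨1, by norm_num⟩, ?_, ?_⟩
    · simp only [pA, extra, if_neg hne45.symm, mul_assoc]
      norm_num
      try decide
    · intro u hunv
      have hne : u.val ≠ (m.val + 5) % 7 := fun h => hunv (Fin.ext h)
      simp only [pA, extra, if_neg hne]
      norm_num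
  · refine ⟨⟨(m.val + 5) % 7, hm5⟩, ⟨0, by norm_num⟩, ?_, ?_⟩
    · simp only [pA, extra, if_neg hne45.symm, mul_assoc]
      norm_num
      try decide
    · intro u hunv
      have hne : u.val ≠ (m.val + 5) % 7 := fun h => hunv (Fin.ext h)
      simp only [pA, extra, if_neg hne]
      norm_num
  · -- step 5: vote i1, swap positions 0,1
    refine ⟨⟨(m.val + 6) % 7, hm6⟩, ⟨0, by norm_num⟩, ?_, ?_⟩
    · simp only [pA, extra, if_neg hne46.symm, if_neg hne56.symm, mul_assoc]
      norm_num
      try decide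
    · intro u hunv
      have hne : u.val ≠ (m.val + 6) % 7 := fun h => hunv (Fin.ext h)
      simp only [pA, extra, if_neg hne]
      norm_num

lemma pA_inv (m : Fin 7) (v : Fin 7) (c : Fin 8) :
    (pA m 6 v)⁻¹ c = (extra m 6 v)⁻¹ (posInv v c) := by
  simp only [pA, mul_inv_rev, Equiv.Perm.mul_apply, fishburn_inv]

lemma pA_cw (m : Fin 7) : IsCondorcetWinner (pA m 6) m.castSucc := by
  intro c' hc'
  simp only [pA_inv]
  revert hc'
  revert c'
  revert m
  decide

/-- In Fishburn's example, making `x` a Condorcet winner needs 7 adjacent swaps, while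
each `a_i` needs only 6. -/
theorem stmt19 :
    dodgsonScore fishburnProfile 7 = 7 ∧
    ∀ i : Fin 7, dodgsonScore fishburnProfile i.castSucc = 6 := by
  constructor
  · unfold dodgsonScore
    have hmem : (7 : ℕ) ∈ {k : ℕ | ∃ p : ℕ → (Fin 7 → Equiv.Perm (Fin 8)),
        p 0 = fishburnProfile ∧ (∀ i < k, AdjSwap (p i) (p (i + 1))) ∧
        IsCondorcetWinner (p k) 7} := ⟨pX, pX_zero, pX_adj, pX_cw⟩
    refine le_antisymm (Nat.sInf_le hmem) (le_csInf ⟨7, hmem⟩ ?_)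
    rintro k ⟨p, h0, hs, hcw⟩
    have h := chain_D 7 k p hs
    rw [h0, D_fish_x, cw_D (p k) 7 hcw] at h
    omega
  · intro i
    unfold dodgsonScore
    have hmem : (6 : ℕ) ∈ {k : ℕ | ∃ p : ℕ → (Fin 7 → Equiv.Perm (Fin 8)),
        p 0 = fishburnProfile ∧ (∀ i' < k, AdjSwap (p i') (p (i' + 1))) ∧
        IsCondorcetWinner (p k) i.castSucc} := ⟨pA i, pA_zero i, pA_adj i, pA_cw i⟩
    refine le_antisymm (Nat.sInf_le hmem) (le_csInf ⟨6, hmem⟩ ?_)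
    rintro k ⟨p, h0, hs, hcw⟩
    have h := chain_D i.castSucc k p hs
    rw [h0, D_fish_a i, cw_D (p k) i.castSucc hcw] at h
    omega
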